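/- Let k be a field, D a division algebra over k such that dim_k D < card k (as cardinals). Then D is algebraic over k, i.e., every element of D satisfies a nonzero polynomial with coefficients in k. -/
import Mathlib


universe u v

/-- A division algebra `D` over a field `k` with `dim_k D < card k` is
algebraic over `k`. -/
theorem stmt2 (k : Type u) (D : Type v) [Field k] [DivisionRing D] [Algebra k D]
    (hcard : Cardinal.lift.{u} (Module.rank k D) < Cardinal.lift.{v} (Cardinal.mk k)) :
    ∀ d : D, IsAlgebraic k d := by
  intro d
  by_contra hd
  -- `d` is transcendental over `k`.
  replace hd : Transcendental k d := hd
  classical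
  -- the set of elements we want to commute
  set S : Set D := insert d (Set.range (algebraMap k D)) with hS
  have hcomm : ∀ a ∈ S, ∀ b ∈ S, a * b = b * a := by
    rintro a ha b hb
    rcases ha with rfl | ⟨x, rfl⟩
    · rcases hb with rfl | ⟨y, rfl⟩
      · rfl
      · exact (Algebra.commutes y a).symm
    · rcases hb with rfl | ⟨y, rfl⟩
      · exact Algebra.commutes x b
      · exact Algebra.commutes x _
  set F : Subring D := Subring.centralizer ((Subring.centralizer S : Subring D) : Set D) with hF
  have hS1 : S ⊆ ((Subring.centralizer S : Subring D) : Set D) := fun a ha =>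
    Subring.mem_centralizer_iff.mpr fun g hg => hcomm g hg a ha
  have hSF : S ⊆ (F : Set D) := fun a ha =>
    Subring.mem_centralizer_iff.mpr fun g hg =>
      (Subring.mem_centralizer_iff.mp hg a ha).symm
  have hFC : (F : Set D) ⊆ ((Subring.centralizer S : Subring D) : Set D) := fun a ha =>
    Subring.mem_centralizer_iff.mpr fun g hg =>
      Subring.mem_centralizer_iff.mp ha g (hS1 hg)
  -- F is closed under inverses
  have hinv : ∀ a : F, (a : D)⁻¹ ∈ F := fun a =>
    Subring.mem_centralizer_iff.mpr fun g hg =>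
      (Commute.inv_right₀ (Subring.mem_centralizer_iff.mp a.2 g hg))
  letI : DivisionRing F :=
    { (inferInstance : Ring F) with
      inv := fun a => ⟨(a : D)⁻¹, hinv a⟩
      mul_inv_cancel := fun a ha => Subtype.ext <| mul_inv_cancel₀
        (show (a : D) ≠ 0 from fun h => ha (Subtype.ext h))
      inv_zero := Subtype.ext inv_zero
      nnqsmul := _
      qsmul := _ }
  letI : Field F :=
    { (inferInstance : DivisionRing F) with
      mul_comm := fun a b => Subtype.ext <|
        Subring.mem_centralizer_iff.mp b.2 (a : D) (hFC a.2) }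
  letI : Algebra k F :=
    ((algebraMap k D).codRestrict F.toSubsemiring
      (fun x => hSF (Set.mem_insert_iff.mpr (Or.inr ⟨x, rfl⟩)))).toAlgebra
  -- the inclusion as an algebra hom
  let ψ : F →ₐ[k] D :=
    { toRingHom := F.subtype
      commutes' := fun x => rfl }
  have hψ : Function.Injective ψ := Subtype.coe_injective
  let d' : F := ⟨d, hSF (Set.mem_insert _ _)⟩
  have hd' : Transcendental k d' := by
    rw [transcendental_iff]
    intro p hp
    refine (transcendental_iff.mp hd) p ?_
    have := congrArg ψ hp
    rwa [← Polynomial.aeval_algHom_apply, map_zero] at this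
  have li := hd'.linearIndependent_sub_inv
  have li2 : LinearIndependent k fun a : k => ψ ((d' - algebraMap k F a)⁻¹) :=
    li.map' ψ.toLinearMap (LinearMap.ker_eq_bot.mpr hψ)
  have := li2.cardinal_lift_le_rank
  exact absurd this (not_le.mpr hcard)
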